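/- Let H₀, H₁ ∈ B(𝓗) be self-adjoint, let ε > 0 and η > 0, let g be a switching function, set H(t) := H₀ + ε·g(η·t)·H₁, assume spectrum of H(t) is contained in [1,∞) for every t ∈ ℝ, let U be a unitary propagator for the family t ↦ H(t), and let n ∈ ℕ. Then the supremum over all (t,r) ∈ ℝ² of ‖((√H(t))⁻¹)^n · U(t,r) · (√H(r))^n‖ equals the supremum of the same quantity over (t,r) ∈ [0, 1/η] × [0, 1/η]. -/

import Mathlib

open MeasureTheory
open scoped ENNReal
set_option synthInstance.maxHeartbeats 1000000
set_option maxHeartbeats 1000000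

variable {𝓗 : Type*} [NormedAddCommGroup 𝓗] [InnerProductSpace ℂ 𝓗] [CompleteSpace 𝓗]

/-- A unitary propagator for the family `t ↦ H t` of bounded self-adjoint operators:
every `U t r` is unitary, `U t t = 1`, `U t r * U r u = U t u`, and for each fixed `r`
the map `t ↦ U t r` is differentiable in operator norm with `i·(d/dt)U(t,r) = H(t)·U(t,r)`,
i.e. the derivative is `−i·(H(t)·U(t,r))`. -/
def IsUnitaryPropagator (H : ℝ → 𝓗 →L[ℂ] 𝓗) (U : ℝ → ℝ → 𝓗 →L[ℂ] 𝓗) : Prop :=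
  (∀ t r, U t r ∈ unitary (𝓗 →L[ℂ] 𝓗)) ∧ (∀ t, U t t = 1) ∧
  (∀ t r u, U t r * U r u = U t u) ∧
  (∀ r t, HasDerivAt (fun s => U s r) (-(Complex.I • (H t * U t r))) t)

/-- Conjugation by a unitary, as a star algebra homomorphism. -/
noncomputable def Stmt16.conjSAH (u : 𝓗 →L[ℂ] 𝓗) (hu : u ∈ unitary (𝓗 →L[ℂ] 𝓗)) :
    (𝓗 →L[ℂ] 𝓗) →⋆ₐ[ℂ] (𝓗 →L[ℂ] 𝓗) where
  toFun x := u * x * star u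
  map_one' := by simpa using (Unitary.mem_iff.mp hu).2
  map_mul' x y := by
    have h : star u * u = 1 := (Unitary.mem_iff.mp hu).1
    simp only [mul_assoc]
    rw [← mul_assoc (star u) u, h, one_mul]
  map_zero' := by simp
  map_add' x y := by simp [mul_add, add_mul]
  commutes' r := by
    have h2 : u * star u = 1 := (Unitary.mem_iff.mp hu).2
    rw [Algebra.algebraMap_eq_smul_one]
    show u * (r • 1) * star u = r • (1 : 𝓗 →L[ℂ] 𝓗)
    rw [mul_smul_comm, mul_one, smul_mul_assoc, h2]
  map_star' x := by simp [star_mul, mul_assoc]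

/-- A unitary commuting with a nonnegative operator commutes with its square root. -/
lemma Stmt16.commute_sqrt {u a : 𝓗 →L[ℂ] 𝓗} (hu : u ∈ unitary (𝓗 →L[ℂ] 𝓗))
    (ha : (0 : 𝓗 →L[ℂ] 𝓗) ≤ a) (h : u * a = a * u) : u * CFC.sqrt a = CFC.sqrt a * u := by
  have h2 : u * star u = 1 := (Unitary.mem_iff.mp hu).2
  have h1 : u * a * star u = a := by rw [h, mul_assoc, h2, mul_one]
  have hcont : Continuous fun x : 𝓗 →L[ℂ] 𝓗 => u * x * star u :=
    (continuous_const.mul continuous_id).mul continuous_const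
  have hmap := StarAlgHomClass.map_cfc (Stmt16.conjSAH u hu) NNReal.sqrt a
    (by fun_prop) hcont ha (by show (0 : 𝓗 →L[ℂ] 𝓗) ≤ u * a * star u; rw [h1]; exact ha)
  have hfix : (Stmt16.conjSAH u hu) a = a := h1
  rw [hfix] at hmap
  have hm : u * cfc NNReal.sqrt a * star u = cfc NNReal.sqrt a := hmap
  rw [CFC.sqrt_eq_cfc]
  calc u * cfc NNReal.sqrt a = u * cfc NNReal.sqrt a * (star u * u) := by
        rw [(Unitary.mem_iff.mp hu).1, mul_one]
    _ = (u * cfc NNReal.sqrt a * star u) * u := by simp only [mul_assoc]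
    _ = cfc NNReal.sqrt a * u := by rw [hm]

/-- If the Hamiltonian is constant on `[a, b]`, the propagator `U b a` commutes with it. -/
lemma Stmt16.commute_of_const {H : ℝ → 𝓗 →L[ℂ] 𝓗} {U : ℝ → ℝ → 𝓗 →L[ℂ] 𝓗}
    (hU : IsUnitaryPropagator H U) {a b : ℝ} (hab : a ≤ b)
    (hconst : ∀ s ∈ Set.Icc a b, H s = H a) : U b a * H a = H a * U b a := by
  obtain ⟨hunit, hone, hmul, hder⟩ := hU
  set f : ℝ → 𝓗 →L[ℂ] 𝓗 := fun s => U s a * H a - H a * U s a with hf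
  set f' : ℝ → 𝓗 →L[ℂ] 𝓗 := fun s =>
    (-(Complex.I • (H s * U s a))) * H a - H a * (-(Complex.I • (H s * U s a)))
  have hder' : ∀ s, HasDerivAt f (f' s) s := fun s =>
    ((hder a s).mul_const (H a)).sub ((hder a s).const_mul (H a))
  have hcontU : Continuous fun s => U s a := by
    rw [continuous_iff_continuousAt]; exact fun s => (hder a s).continuousAt
  have hcontf : ContinuousOn f (Set.Icc a b) :=
    ((hcontU.mul continuous_const).sub (continuous_const.mul hcontU)).continuousOn
  have hbound : ∀ x ∈ Set.Ico a b, ‖f' x‖ ≤ ‖H a‖ * ‖f x‖ + 0 := by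
    intro x hx
    have hx' : H x = H a := hconst x ⟨hx.1, hx.2.le⟩
    have heq : f' x = (-Complex.I) • (H a * f x) := by
      simp only [f', f, hx', neg_smul, mul_neg, neg_mul, sub_neg_eq_add, mul_sub, smul_sub,
        smul_mul_assoc, mul_smul_comm, mul_assoc]
    rw [heq, add_zero, norm_smul]
    have h1 : ‖-Complex.I‖ = 1 := by simp
    rw [h1, one_mul]
    exact norm_mul_le _ _
  have h0 : ‖f a‖ ≤ 0 := by simp [f, hone a]
  have hg := norm_le_gronwallBound_of_norm_deriv_right_le hcontf
    (fun x _ => (hder' x).hasDerivWithinAt) h0 hbound b ⟨hab, le_rfl⟩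
  rw [gronwallBound_ε0_δ0] at hg
  have hfb : U b a * H a - H a * U b a = 0 := norm_le_zero_iff.mp hg
  exact sub_eq_zero.mp hfb

lemma Stmt16.enorm_congr {x y : 𝓗 →L[ℂ] 𝓗} (h : ‖x‖ = ‖y‖) :
    (‖x‖₊ : ℝ≥0∞) = (‖y‖₊ : ℝ≥0∞) := by
  rw [show ‖x‖₊ = ‖y‖₊ from NNReal.eq h]

theorem stmt_16 (H₀ H₁ : 𝓗 →L[ℂ] 𝓗) (hH₀ : IsSelfAdjoint H₀) (hH₁ : IsSelfAdjoint H₁)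
    (ε η : ℝ) (hε : 0 < ε) (hη : 0 < η)
    (g : ℝ → ℝ) (hg : ContDiff ℝ 1 g) (hg0 : ∀ s ≤ (0 : ℝ), g s = 0)
    (hg' : ∀ s ∉ Set.Ioo (0 : ℝ) 1, deriv g s = 0)
    (H : ℝ → 𝓗 →L[ℂ] 𝓗) (hH : ∀ t, H t = H₀ + (ε * g (η * t)) • H₁)
    (hspec : ∀ t, spectrum ℝ (H t) ⊆ Set.Ici 1)
    (U : ℝ → ℝ → 𝓗 →L[ℂ] 𝓗) (hU : IsUnitaryPropagator H U) (n : ℕ) :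
    (⨆ t : ℝ, ⨆ r : ℝ,
        (‖(Ring.inverse (CFC.sqrt (H t))) ^ n * U t r * (CFC.sqrt (H r)) ^ n‖₊ : ℝ≥0∞)) =
    ⨆ t ∈ Set.Icc (0 : ℝ) (1 / η), ⨆ r ∈ Set.Icc (0 : ℝ) (1 / η),
        (‖(Ring.inverse (CFC.sqrt (H t))) ^ n * U t r * (CFC.sqrt (H r)) ^ n‖₊ : ℝ≥0∞) := by
  obtain ⟨hunit, hone, hmul, hder⟩ := id hU
  set c : ℝ := 1 / η with hc
  have hc0 : (0 : ℝ) ≤ c := by positivity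
  -- `g` is constant on `[1, ∞)`
  have hg1 : ∀ s, 1 ≤ s → g s = g 1 := by
    intro s hs
    have := constant_of_has_deriv_right_zero (f := g) (a := 1) (b := s)
      hg.continuous.continuousOn (fun x hx => by
        have hd : HasDerivAt g (deriv g x) x := (hg.differentiable one_ne_zero x).hasDerivAt
        rw [hg' x (fun hmem => absurd hmem.2 (not_lt.mpr hx.1))] at hd
        exact hd.hasDerivWithinAt)
    exact this s ⟨hs, le_rfl⟩
  have hHr : ∀ t, c ≤ t → H t = H c := by
    intro t ht
    have h1 : η * c = 1 := by rw [hc, mul_one_div_cancel hη.ne']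
    have h2 : (1 : ℝ) ≤ η * t := by
      rw [← h1]; exact mul_le_mul_of_nonneg_left ht hη.le
    rw [hH t, hH c, h1, hg1 _ h2, hg1 1 le_rfl]
  have hHl : ∀ t, t ≤ 0 → H t = H 0 := by
    intro t ht
    have h2 : η * t ≤ 0 := by nlinarith
    rw [hH t, hH 0, mul_zero, hg0 0 le_rfl, hg0 _ h2]
  have hsa : ∀ t, IsSelfAdjoint (H t) := by
    intro t
    rw [hH t]
    exact hH₀.add (by rw [IsSelfAdjoint, star_smul, star_trivial, hH₁.star_eq])
  have hpos : ∀ t, (0 : 𝓗 →L[ℂ] 𝓗) ≤ H t := by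
    intro t
    rw [StarOrderedRing.nonneg_iff_spectrum_nonneg (R := ℝ) _ (hsa t)]
    exact fun x hx => le_trans zero_le_one (hspec t hx)
  have hstar : ∀ t r, U r t = star (U t r) := by
    intro t r
    have h1 : star (U t r) * U t r = 1 := (Unitary.mem_iff.mp (hunit t r)).1
    calc U r t = 1 * U r t := (one_mul _).symm
      _ = star (U t r) * U t r * U r t := by rw [h1]
      _ = star (U t r) * U t t := by rw [mul_assoc, hmul]
      _ = star (U t r) := by rw [hone, mul_one]
  -- commutation of propagators with the (constant) Hamiltonian outside (0, c)
  have hcomm_r : ∀ t, c ≤ t → U t c * H c = H c * U t c := fun t ht =>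
    Stmt16.commute_of_const hU ht (fun s hs => hHr s hs.1)
  have hcomm_l : ∀ t, t ≤ 0 → U 0 t * H t = H t * U 0 t := fun t ht =>
    Stmt16.commute_of_const hU ht (fun s hs => (hHl s hs.2).trans (hHl t ht).symm)
  have hstar_comm : ∀ t r, U t r * H t = H t * U t r → U r t * H t = H t * U r t := by
    intro t r h
    have h2 := congrArg star h
    rw [star_mul, star_mul, (hsa t).star_eq] at h2
    rw [hstar t r]
    exact h2.symm
  have hcomm_l' : ∀ t, t ≤ 0 → U t 0 * H 0 = H 0 * U t 0 := by
    intro t ht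
    exact hstar_comm 0 t (by rw [← hHl t ht]; exact hcomm_l t ht)
  have hcomm_r' : ∀ r, c ≤ r → U c r * H c = H c * U c r := by
    intro r hr
    have h1 : U r c * H r = H r * U r c := by rw [hHr r hr]; exact hcomm_r r hr
    have h2 := hstar_comm r c h1
    rwa [hHr r hr] at h2
  -- commutation with powers of sqrt and its inverse
  have hcomm_pow : ∀ u x : 𝓗 →L[ℂ] 𝓗, u ∈ unitary (𝓗 →L[ℂ] 𝓗) → (0 : 𝓗 →L[ℂ] 𝓗) ≤ x →
      u * x = x * u →
      u * (CFC.sqrt x) ^ n = (CFC.sqrt x) ^ n * u ∧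
      u * (Ring.inverse (CFC.sqrt x)) ^ n = (Ring.inverse (CFC.sqrt x)) ^ n * u := by
    intro u x hu hx h
    have h1 : Commute u (CFC.sqrt x) := Stmt16.commute_sqrt hu hx h
    have h2 : Commute u (Ring.inverse (CFC.sqrt x)) := by
      by_cases hun : IsUnit (CFC.sqrt x)
      · obtain ⟨v, hv⟩ := hun
        rw [← hv, Ring.inverse_unit v]
        rw [← hv] at h1
        exact h1.units_inv_right
      · rw [Ring.inverse_non_unit _ hun]
        exact Commute.zero_right u
    exact ⟨(h1.pow_right n).eq, (h2.pow_right n).eq⟩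
  -- the four norm-invariance moves
  have move_left : ∀ A u Z : 𝓗 →L[ℂ] 𝓗, u * A = A * u → A * (u * Z) = u * (A * Z) := by
    intro A u Z h; rw [← mul_assoc, ← h, mul_assoc]
  have Φcongr : ∀ {t r t' r' : ℝ},
      ‖(Ring.inverse (CFC.sqrt (H t))) ^ n * U t r * (CFC.sqrt (H r)) ^ n‖ =
        ‖(Ring.inverse (CFC.sqrt (H t'))) ^ n * U t' r' * (CFC.sqrt (H r')) ^ n‖ →
      (‖(Ring.inverse (CFC.sqrt (H t))) ^ n * U t r * (CFC.sqrt (H r)) ^ n‖₊ : ℝ≥0∞) =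
        (‖(Ring.inverse (CFC.sqrt (H t'))) ^ n * U t' r' * (CFC.sqrt (H r')) ^ n‖₊ : ℝ≥0∞) :=
    fun h => Stmt16.enorm_congr h
  have moveT : ∀ t r t₀ : ℝ, U t t₀ ∈ unitary (𝓗 →L[ℂ] 𝓗) → H t = H t₀ →
      U t t₀ * H t₀ = H t₀ * U t t₀ →
      ‖(Ring.inverse (CFC.sqrt (H t))) ^ n * U t r * (CFC.sqrt (H r)) ^ n‖ =
        ‖(Ring.inverse (CFC.sqrt (H t₀))) ^ n * U t₀ r * (CFC.sqrt (H r)) ^ n‖ := by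
    intro t r t₀ hu hHeq hcomm
    have hA := (hcomm_pow (U t t₀) (H t₀) hu (hpos t₀) hcomm).2
    rw [hHeq, ← hmul t t₀ r]
    rw [show (Ring.inverse (CFC.sqrt (H t₀))) ^ n * (U t t₀ * U t₀ r) * (CFC.sqrt (H r)) ^ n
        = U t t₀ * ((Ring.inverse (CFC.sqrt (H t₀))) ^ n * U t₀ r * (CFC.sqrt (H r)) ^ n) by
      rw [move_left _ _ _ hA, mul_assoc, mul_assoc]]
    exact CStarRing.norm_mem_unitary_mul _ hu
  have moveR : ∀ t r r₀ : ℝ, U r₀ r ∈ unitary (𝓗 →L[ℂ] 𝓗) → H r = H r₀ →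
      U r₀ r * H r₀ = H r₀ * U r₀ r →
      ‖(Ring.inverse (CFC.sqrt (H t))) ^ n * U t r * (CFC.sqrt (H r)) ^ n‖ =
        ‖(Ring.inverse (CFC.sqrt (H t))) ^ n * U t r₀ * (CFC.sqrt (H r₀)) ^ n‖ := by
    intro t r r₀ hu hHeq hcomm
    have hB := (hcomm_pow (U r₀ r) (H r₀) hu (hpos r₀) hcomm).1
    rw [hHeq, ← hmul t r₀ r]
    rw [show (Ring.inverse (CFC.sqrt (H t))) ^ n * (U t r₀ * U r₀ r) * (CFC.sqrt (H r₀)) ^ n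
        = ((Ring.inverse (CFC.sqrt (H t))) ^ n * U t r₀ * (CFC.sqrt (H r₀)) ^ n) * U r₀ r by
      rw [← mul_assoc, mul_assoc _ _ ((CFC.sqrt (H r₀)) ^ n), hB, ← mul_assoc]]
    exact CStarRing.norm_mul_mem_unitary _ hu
  -- key reduction to the square
  have hkey : ∀ t r : ℝ, ∃ t' ∈ Set.Icc (0 : ℝ) c, ∃ r' ∈ Set.Icc (0 : ℝ) c,
      (‖(Ring.inverse (CFC.sqrt (H t))) ^ n * U t r * (CFC.sqrt (H r)) ^ n‖₊ : ℝ≥0∞) =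
        (‖(Ring.inverse (CFC.sqrt (H t'))) ^ n * U t' r' * (CFC.sqrt (H r')) ^ n‖₊ : ℝ≥0∞) := by
    intro t r
    obtain ⟨t', ht', h1⟩ : ∃ t' ∈ Set.Icc (0 : ℝ) c,
        ‖(Ring.inverse (CFC.sqrt (H t))) ^ n * U t r * (CFC.sqrt (H r)) ^ n‖ =
          ‖(Ring.inverse (CFC.sqrt (H t'))) ^ n * U t' r * (CFC.sqrt (H r)) ^ n‖ := by
      rcases le_or_gt t 0 with h | h
      · exact ⟨0, ⟨le_rfl, hc0⟩, moveT t r 0 (hunit t 0) (hHl t h) (hcomm_l' t h)⟩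
      rcases le_or_gt t c with h2 | h2
      · exact ⟨t, ⟨h.le, h2⟩, rfl⟩
      · exact ⟨c, ⟨hc0, le_rfl⟩, moveT t r c (hunit t c) (hHr t h2.le) (hcomm_r t h2.le)⟩
    obtain ⟨r', hr', h2⟩ : ∃ r' ∈ Set.Icc (0 : ℝ) c,
        ‖(Ring.inverse (CFC.sqrt (H t'))) ^ n * U t' r * (CFC.sqrt (H r)) ^ n‖ =
          ‖(Ring.inverse (CFC.sqrt (H t'))) ^ n * U t' r' * (CFC.sqrt (H r')) ^ n‖ := by
      rcases le_or_gt r 0 with h | h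
      · refine ⟨0, ⟨le_rfl, hc0⟩, moveR t' r 0 (hunit 0 r) (hHl r h) ?_⟩
        rw [← hHl r h]
        exact hcomm_l r h
      rcases le_or_gt r c with h2 | h2
      · exact ⟨r, ⟨h.le, h2⟩, rfl⟩
      · exact ⟨c, ⟨hc0, le_rfl⟩, moveR t' r c (hunit c r) (hHr r h2.le) (hcomm_r' r h2.le)⟩
    exact ⟨t', ht', r', hr', Φcongr (h1.trans h2)⟩
  -- conclude by a supremum argument
  apply le_antisymm
  · refine iSup_le fun t => iSup_le fun r => ?_
    obtain ⟨t', ht', r', hr', h⟩ := hkey t r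
    rw [h]
    exact le_trans
      (le_biSup (fun r' => (‖(Ring.inverse (CFC.sqrt (H t'))) ^ n * U t' r' *
        (CFC.sqrt (H r')) ^ n‖₊ : ℝ≥0∞)) hr')
      (le_biSup (fun t' => ⨆ r' ∈ Set.Icc (0 : ℝ) c,
        (‖(Ring.inverse (CFC.sqrt (H t'))) ^ n * U t' r' * (CFC.sqrt (H r')) ^ n‖₊ : ℝ≥0∞)) ht')
  · refine iSup₂_le fun t _ => iSup₂_le fun r _ => ?_
    refine le_trans (le_iSup (fun r => (‖(Ring.inverse (CFC.sqrt (H t))) ^ n * U t r *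
      (CFC.sqrt (H r)) ^ n‖₊ : ℝ≥0∞)) r) ?_
    exact le_iSup (fun t => ⨆ r : ℝ,
      (‖(Ring.inverse (CFC.sqrt (H t))) ^ n * U t r * (CFC.sqrt (H r)) ^ n‖₊ : ℝ≥0∞)) t
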